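/- arXiv:math/0702891 — 2 statements merged into one kernel-verified Lean document; each statement's English description precedes it below -/
import Mathlib

section
/- Descartes' rule of signs: let f ∈ ℝ[x] be a nonzero polynomial. Then the number of positive real roots of f, counted with multiplicity, is at most V(f), the number of sign changes in the ordered sequence of nonzero coefficients of f. -/
open Polynomial

/-- The number of sign changes in the ordered sequence of nonzero coefficients of `f`. -/
noncomputable def signChanges (f : Polynomial ℝ) : ℕ :=
  let l := (f.support.sort (· ≤ ·)).map f.coeff
  (l.zip l.tail).countP (fun p => decide (p.1 * p.2 < 0))

section Aux

open List Finset

/-- recursive sign-change counter -/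
noncomputable def sc : List ℝ → ℕ
  | [] => 0
  | [_] => 0
  | a :: b :: t => (if a * b < 0 then 1 else 0) + sc (b :: t)

@[simp] lemma sc_nil : sc [] = 0 := by simp [sc]
@[simp] lemma sc_single (a : ℝ) : sc [a] = 0 := by simp [sc]
@[simp] lemma sc_cons_cons (a b : ℝ) (t : List ℝ) :
    sc (a :: b :: t) = (if a * b < 0 then 1 else 0) + sc (b :: t) := by
  rw [sc]

lemma sc_eq : ∀ l : List ℝ,
    (l.zip l.tail).countP (fun p => decide (p.1 * p.2 < 0)) = sc l
  | [] => by simp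
  | [_] => by simp
  | a :: b :: t => by
    have := sc_eq (b :: t)
    simp only [List.tail_cons, List.zip_cons_cons, List.countP_cons] at *
    simp [this]
    omega

lemma sc_le_cons (a : ℝ) (l : List ℝ) : sc l ≤ sc (a :: l) := by
  cases l with
  | nil => simp
  | cons b t => simp

lemma sc_insert (s a : ℝ) (l : List ℝ) (hs : s ≠ 0) (ha : a ≠ 0)
    (hl : ∀ x ∈ l, x ≠ 0) : sc (s :: l) ≤ sc (s :: a :: l) := by
  cases l with
  | nil => simp
  | cons b t =>
    have hb : b ≠ 0 := hl b (by simp)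
    simp only [sc_cons_cons]
    have key : (if s * b < 0 then 1 else 0)
        ≤ (if s * a < 0 then 1 else 0) + (if a * b < 0 then 1 else 0) := by
      by_cases h1 : s * b < 0
      · by_cases h2 : s * a < 0
        · simp [if_pos h1, if_pos h2]
        · by_cases h3 : a * b < 0
          · simp [if_pos h1, if_pos h3]
          · exfalso
            have hsa : 0 < s * a := lt_of_le_of_ne (not_lt.1 h2) (Ne.symm (mul_ne_zero hs ha))
            have hab : 0 < a * b := lt_of_le_of_ne (not_lt.1 h3) (Ne.symm (mul_ne_zero ha hb))
            nlinarith [mul_pos hsa hab, sq_nonneg a]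
      · simp [if_neg h1]
    omega

lemma sc_mono_cons {l' l : List ℝ} (h : l' <+ l) (hl : ∀ x ∈ l, x ≠ 0) :
    ∀ s : ℝ, s ≠ 0 → sc (s :: l') ≤ sc (s :: l) := by
  induction h with
  | slnil => intro s hs; exact le_refl _
  | @cons l' l a h ih =>
    intro s hs
    have h1 := ih (fun x hx => hl x (by simp [hx])) s hs
    exact h1.trans (sc_insert s a l hs (hl a (by simp)) (fun x hx => hl x (by simp [hx])))
  | @cons_cons l' l a h ih =>
    intro s hs
    simp only [sc_cons_cons]
    have := ih (fun x hx => hl x (by simp [hx])) a (hl a (by simp))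
    omega

lemma sc_mono {l' l : List ℝ} (h : l' <+ l) (hl : ∀ x ∈ l, x ≠ 0) : sc l' ≤ sc l := by
  induction h with
  | slnil => exact le_refl _
  | @cons l' l a h ih =>
    exact (ih (fun x hx => hl x (by simp [hx]))).trans (sc_le_cons a l)
  | @cons_cons l' l a h ih =>
    exact sc_mono_cons h (fun x hx => hl x (by simp [hx])) a (hl a (by simp))

lemma sc_alt : ∀ l : List ℝ, l.Chain' (fun x y => x * y < 0) → sc l = l.length - 1
  | [] => by simp
  | [_] => by simp
  | a :: b :: t => by
    intro h
    change List.IsChain _ (a :: b :: t) at h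
    rw [List.isChain_cons_cons] at h
    have := sc_alt (b :: t) h.2
    simp [if_pos h.1, this]
    omega

lemma sc_concat : ∀ (l : List ℝ) (x : ℝ),
    sc (l ++ [x]) = sc l + (l.getLast?.elim 0 (fun y => if y * x < 0 then 1 else 0)) := by
  intro l
  induction l with
  | nil => simp
  | cons a t ih =>
    intro x
    cases t with
    | nil => simp [sc]
    | cons b t' =>
      have := ih x
      simp only [List.cons_append, sc_cons_cons, List.getLast?_cons_cons] at *
      omega

lemma sc_reverse : ∀ l : List ℝ, sc l.reverse = sc l := by
  intro l
  induction l with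
  | nil => simp
  | cons a t ih =>
    cases t with
    | nil => simp
    | cons b t' =>
      rw [List.reverse_cons, sc_concat, List.getLast?_reverse, ih]
      simp [mul_comm, Nat.add_comm]

lemma coeff_zero_mul_XC (g : ℝ[X]) (r : ℝ) : (g * (X - C r)).coeff 0 = -(g.coeff 0 * r) := by
  rw [Polynomial.mul_coeff_zero]
  simp [coeff_X_zero, coeff_C]

lemma partial_sum (g : ℝ[X]) (r : ℝ) (q : ℕ) :
    ∑ i ∈ Finset.range (q + 1), (g * (X - C r)).coeff i * r ^ i
      = -(g.coeff q * r ^ (q + 1)) := by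
  induction q with
  | zero => simp [coeff_zero_mul_XC]
  | succ q ih =>
    rw [Finset.sum_range_succ, ih, Polynomial.coeff_mul_X_sub_C]
    ring

lemma partial_sum_Ico (g : ℝ[X]) (r : ℝ) {p q : ℕ} (hpq : p < q) :
    ∑ i ∈ Finset.Ico (p + 1) (q + 1), (g * (X - C r)).coeff i * r ^ i
      = g.coeff p * r ^ (p + 1) - g.coeff q * r ^ (q + 1) := by
  have h := Finset.sum_Ico_consecutive (fun i => (g * (X - C r)).coeff i * r ^ i)
    (Nat.zero_le (p + 1)) (by omega : p + 1 ≤ q + 1)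
  rw [← Finset.range_eq_Ico, ← Finset.range_eq_Ico] at h
  have h1 := partial_sum g r p
  have h2 := partial_sum g r q
  linarith

lemma exists_pos_of_sum_pos {r : ℝ} {s : Finset ℕ} {φ : ℕ → ℝ} (hr : 0 < r)
    (h : 0 < ∑ i ∈ s, φ i * r ^ i) : ∃ i ∈ s, 0 < φ i := by
  by_contra hc
  push_neg at hc
  have : ∑ i ∈ s, φ i * r ^ i ≤ 0 :=
    Finset.sum_nonpos fun i hi =>
      mul_nonpos_iff.2 (Or.inr ⟨hc i hi, (pow_pos hr i).le⟩)
  linarith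

/-- the key construction: an alternating descending sequence of indices of nonzero
coefficients of `g * (X - C r)`. -/
lemma key_list {g : ℝ[X]} {r : ℝ} (hr : 0 < r) :
    ∀ (ns : List ℕ) (n : ℕ), (n :: ns).Chain' (· > ·)
      → (∀ m ∈ n :: ns, g.coeff m ≠ 0)
      → ∃ (i : ℕ) (L : List ℕ),
          (i :: L).Chain' (· > ·)
          ∧ (i :: L).Chain' (fun x y => (g * (X - C r)).coeff x * (g * (X - C r)).coeff y < 0)
          ∧ (∀ m ∈ i :: L, m ≤ n ∧ (g * (X - C r)).coeff m ≠ 0)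
          ∧ (g * (X - C r)).coeff i * g.coeff n < 0
          ∧ (i :: L).length = 1 + sc ((n :: ns).map g.coeff) := by
  intro ns
  induction ns with
  | nil =>
    intro n _ hnz
    have hbn : g.coeff n ≠ 0 := hnz n (by simp)
    have hsum : 0 < ∑ i ∈ Finset.range (n + 1),
        (-(g.coeff n) * (g * (X - C r)).coeff i) * r ^ i := by
      have : ∑ i ∈ Finset.range (n + 1),
          (-(g.coeff n) * (g * (X - C r)).coeff i) * r ^ i
          = -(g.coeff n) * ∑ i ∈ Finset.range (n + 1), (g * (X - C r)).coeff i * r ^ i := by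
        rw [Finset.mul_sum]; simp [mul_assoc]
      rw [this, partial_sum]
      have : -(g.coeff n) * -(g.coeff n * r ^ (n + 1)) = (g.coeff n)^2 * r ^ (n+1) := by ring
      rw [this]
      exact mul_pos (pow_two_pos_of_ne_zero hbn) (pow_pos hr _)
    obtain ⟨i, hi, hipos⟩ := exists_pos_of_sum_pos hr hsum
    refine ⟨i, [], List.isChain_singleton _, List.isChain_singleton _, ?_, by nlinarith, by simp⟩
    intro m hm
    simp at hm
    subst hm
    constructor
    · exact Nat.lt_succ_iff.1 (Finset.mem_range.1 hi)
    · intro h0; rw [h0] at hipos; simp at hipos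
  | cons m rest ih =>
    intro n hch hnz
    have hch' : (m :: rest).Chain' (· > ·) := (List.isChain_cons_cons.1 hch).2
    have hnm : m < n := (List.isChain_cons_cons.1 hch).1
    have hnz' : ∀ x ∈ m :: rest, g.coeff x ≠ 0 := fun x hx => hnz x (by simp [hx])
    have hbn : g.coeff n ≠ 0 := hnz n (by simp)
    have hbm : g.coeff m ≠ 0 := hnz m (by simp)
    obtain ⟨i', L', hc1, hc2, hc3, hc4, hc5⟩ := ih m hch' hnz'
    rcases lt_trichotomy (g.coeff n * g.coeff m) 0 with hlt | heq | hgt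
    · -- sign change between m and n
      have hsum : 0 < ∑ i ∈ Finset.Ico (m + 1) (n + 1),
          (-(g.coeff n) * (g * (X - C r)).coeff i) * r ^ i := by
        have : ∑ i ∈ Finset.Ico (m + 1) (n + 1),
            (-(g.coeff n) * (g * (X - C r)).coeff i) * r ^ i
            = -(g.coeff n) * ∑ i ∈ Finset.Ico (m + 1) (n + 1),
                (g * (X - C r)).coeff i * r ^ i := by
          rw [Finset.mul_sum]; simp [mul_assoc]
        rw [this, partial_sum_Ico g r hnm]
        have e : -(g.coeff n) * (g.coeff m * r ^ (m + 1) - g.coeff n * r ^ (n + 1))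
            = -(g.coeff n * g.coeff m) * r ^ (m+1) + (g.coeff n)^2 * r^(n+1) := by ring
        rw [e]
        have p1 : 0 < -(g.coeff n * g.coeff m) * r ^ (m+1) :=
          mul_pos (by linarith) (pow_pos hr _)
        have p2 : 0 < (g.coeff n)^2 * r^(n+1) :=
          mul_pos (pow_two_pos_of_ne_zero hbn) (pow_pos hr _)
        linarith
      obtain ⟨i, hi, hipos⟩ := exists_pos_of_sum_pos hr hsum
      rw [Finset.mem_Ico] at hi
      have hA : (g * (X - C r)).coeff i * g.coeff n < 0 := by nlinarith
      have hci : (g * (X - C r)).coeff i ≠ 0 := by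
        intro h0; rw [h0] at hA; simp at hA
      have hB : (g * (X - C r)).coeff i' * g.coeff m < 0 := hc4
      have hii' : i' < i := by
        have : i' ≤ m := (hc3 i' (by simp)).1
        omega
      refine ⟨i, i' :: L', ?_, ?_, ?_, hA, ?_⟩
      · exact List.isChain_cons_cons.2 ⟨hii', hc1⟩
      · refine List.isChain_cons_cons.2 ⟨?_, hc2⟩
        nlinarith [mul_pos_of_neg_of_neg hA hB]
      · intro x hx
        rcases List.mem_cons.1 hx with h | h
        · subst h; exact ⟨by omega, hci⟩
        · have := hc3 x h
          exact ⟨by omega, this.2⟩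
      · simp only [List.map_cons, sc_cons_cons, if_pos hlt] at *
        simp only [List.length_cons] at *
        omega
    · exact absurd heq (mul_ne_zero hbn hbm)
    · -- same sign: reuse
      refine ⟨i', L', hc1, hc2, ?_, ?_, ?_⟩
      · intro x hx
        have := hc3 x hx
        exact ⟨by omega, this.2⟩
      · nlinarith [hc4, hgt, sq_nonneg (g.coeff m)]
      · have : ¬ (g.coeff n * g.coeff m < 0) := by linarith
        simp only [List.map_cons, sc_cons_cons, if_neg this] at *
        omega

lemma signChanges_eq (f : ℝ[X]) :
    signChanges f = sc ((f.support.sort (· ≤ ·)).map f.coeff) := by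
  unfold signChanges
  exact sc_eq _

/-- key lemma: multiplying by `X - C r` with `r > 0` increases the number of
sign changes by at least one. -/
lemma signChanges_key {g : ℝ[X]} {r : ℝ} (hg : g ≠ 0) (hr : 0 < r) :
    signChanges g + 1 ≤ signChanges (g * (X - C r)) := by
  set h : ℝ[X] := g * (X - C r) with hh
  have hXC : (X - C r : ℝ[X]) ≠ 0 := X_sub_C_ne_zero r
  have hhne : h ≠ 0 := mul_ne_zero hg hXC
  set lsup : List ℕ := g.support.sort (· ≤ ·) with hlsup
  have hdegmem : g.natDegree ∈ lsup :=
    (Finset.mem_sort _).2 (natDegree_mem_support_of_nonzero hg)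
  obtain ⟨n, ns, hrev⟩ : ∃ n ns, lsup.reverse = n :: ns := by
    cases hcase : lsup.reverse with
    | nil =>
      exfalso
      have : lsup = [] := by simpa using congrArg List.reverse hcase
      rw [this] at hdegmem
      simp at hdegmem
    | cons a t => exact ⟨a, t, rfl⟩
  have hsorted : lsup.Pairwise (· < ·) := (Finset.sortedLT_sort _).pairwise
  have hpair : (n :: ns).Pairwise (· > ·) := by
    rw [← hrev]; exact List.pairwise_reverse.2 hsorted
  have hchain : (n :: ns).Chain' (· > ·) := hpair.isChain
  have hgtall : ∀ m ∈ ns, m < n := fun m hm => (List.pairwise_cons.1 hpair).1 m hm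
  have hmem_rev : ∀ m, m ∈ n :: ns ↔ m ∈ g.support := by
    intro m
    rw [← hrev, List.mem_reverse, hlsup, Finset.mem_sort]
  have hnz : ∀ m ∈ n :: ns, g.coeff m ≠ 0 := fun m hm =>
    Polynomial.mem_support_iff.1 ((hmem_rev m).1 hm)
  have hn_deg : n = g.natDegree := by
    have h1 : n ≤ g.natDegree :=
      le_natDegree_of_mem_supp n ((hmem_rev n).1 (by simp))
    have h2 : g.natDegree ≤ n := by
      have hmem : g.natDegree ∈ n :: ns := (hmem_rev _).2 (natDegree_mem_support_of_nonzero hg)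
      rcases List.mem_cons.1 hmem with heq | hmem'
      · omega
      · exact (hgtall _ hmem').le
    omega
  have htop : h.coeff (n + 1) = g.coeff n := by
    have hdeg : h.natDegree = g.natDegree + 1 := by
      rw [hh, natDegree_mul hg hXC, natDegree_X_sub_C]
    rw [hn_deg]
    have e1 : h.coeff (g.natDegree + 1) = h.leadingCoeff := by
      rw [Polynomial.leadingCoeff, hdeg]
    rw [e1, hh, leadingCoeff_mul, (monic_X_sub_C r).leadingCoeff, mul_one]
    rfl
  obtain ⟨i, L, hc1, hc2, hc3, hc4, hc5⟩ := key_list hr ns n hchain hnz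
  set D : List ℕ := (n + 1) :: i :: L with hD
  have hin : i ≤ n := (hc3 i (by simp)).1
  have hDchain : D.Chain' (· > ·) := List.isChain_cons_cons.2 ⟨by omega, hc1⟩
  have hDnz : ∀ m ∈ D, h.coeff m ≠ 0 := by
    intro m hm
    rcases List.mem_cons.1 hm with heq | hm'
    · subst heq; rw [htop]; exact hnz n (by simp)
    · exact (hc3 m hm').2
  have hDalt : D.Chain' (fun x y => h.coeff x * h.coeff y < 0) := by
    refine List.isChain_cons_cons.2 ⟨?_, hc2⟩
    rw [htop]
    nlinarith [hc4]
  have hpairD : D.Pairwise (· > ·) := List.isChain_iff_pairwise.1 hDchain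
  set A : List ℕ := D.reverse with hA
  have hAsorted : A.Pairwise (· < ·) := by
    rw [hA, List.pairwise_reverse]
    exact hpairD
  have hAnz : ∀ m ∈ A, h.coeff m ≠ 0 := by
    intro m hm
    exact hDnz m (List.mem_reverse.1 hm)
  have hAalt : A.Chain' (fun x y => h.coeff x * h.coeff y < 0) := by
    rw [hA]
    change List.IsChain _ D.reverse
    rw [List.isChain_reverse]
    exact hDalt.imp (fun a b hab => by
      show h.coeff b * h.coeff a < 0
      nlinarith [hab])
  have hAsub : A ⊆ h.support.sort (· ≤ ·) := by
    intro x hx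
    exact (Finset.mem_sort _).2 (Polynomial.mem_support_iff.2 (hAnz x hx))
  have hAsl : A <+ h.support.sort (· ≤ ·) := by
    refine List.sublist_of_subperm_of_pairwise ?_ hAsorted (Finset.sortedLT_sort _).pairwise
    exact List.Nodup.subperm (List.Pairwise.imp ne_of_lt hAsorted) hAsub
  have hmap : A.map h.coeff <+ (h.support.sort (· ≤ ·)).map h.coeff :=
    hAsl.map _
  have hbig : sc (A.map h.coeff) ≤ signChanges h := by
    rw [signChanges_eq]
    refine sc_mono hmap ?_
    intro x hx
    obtain ⟨m, hm, rfl⟩ := List.mem_map.1 hx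
    exact Polynomial.mem_support_iff.1 ((Finset.mem_sort _).1 hm)
  have haltmap : (A.map h.coeff).Chain' (fun x y => x * y < 0) :=
    (List.isChain_map _).2 hAalt
  have hsc : sc (A.map h.coeff) = A.length - 1 := by
    rw [sc_alt _ haltmap, List.length_map]
  have hlenA : A.length = L.length + 2 := by
    simp [hA, hD]
  have hscg : sc ((n :: ns).map g.coeff) = signChanges g := by
    rw [signChanges_eq, ← hrev, List.map_reverse, sc_reverse]
  simp only [List.length_cons] at hc5
  omega

lemma descartes_aux : ∀ (n : ℕ) (f : ℝ[X]), f ≠ 0 →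
    (f.roots.filter (fun r => 0 < r)).card = n → n ≤ signChanges f := by
  intro n
  induction n with
  | zero => intro f _ _; exact Nat.zero_le _
  | succ k ih =>
    intro f hf hcard
    obtain ⟨r, hr⟩ : ∃ r, r ∈ f.roots.filter (fun r => 0 < r) :=
      Multiset.card_pos_iff_exists_mem.1 (by omega)
    rw [Multiset.mem_filter] at hr
    obtain ⟨hroot, hrpos⟩ := hr
    have hisroot : f.IsRoot r := (Polynomial.mem_roots hf).1 hroot
    obtain ⟨g, hfg⟩ : (X - C r) ∣ f := Polynomial.dvd_iff_isRoot.2 hisroot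
    rw [mul_comm] at hfg
    have hg : g ≠ 0 := by rintro rfl; simp at hfg; exact hf hfg
    have hroots : f.roots = g.roots + {r} := by
      rw [hfg, Polynomial.roots_mul (hfg ▸ hf), roots_X_sub_C]
    have hfilter : (f.roots.filter (fun r => 0 < r)).card
        = (g.roots.filter (fun r => 0 < r)).card + 1 := by
      rw [hroots, Multiset.filter_add]
      simp [Multiset.filter_singleton, if_pos hrpos]
    have hcardg : (g.roots.filter (fun r => 0 < r)).card = k := by omega
    have h1 := ih g hg hcardg
    have h2 := signChanges_key hg hrpos
    rw [← hfg] at h2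
    omega

end Aux

/-- **Descartes' rule of signs**: a nonzero real polynomial has at most
`signChanges f` positive real roots, counted with multiplicity. -/
theorem descartes_rule_of_signs (f : Polynomial ℝ) (hf : f ≠ 0) :
    (f.roots.filter (fun r => 0 < r)).card ≤ signChanges f := by
  exact descartes_aux _ f hf rfl
end

section
/- Let f ∈ ℝ[x,y] be a nonzero polynomial with at most t nonzero terms. Then there exists an odd integer n with 3 ≤ n ≤ 12t-5 such that f(x, x^n) is not the zero polynomial in ℝ[x]. -/
open Polynomial

/-- If `f ∈ ℝ[x,y]` is nonzero with at most `t` nonzero terms, then there is an odd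
integer `n` with `3 ≤ n ≤ 12t - 5` such that `f(x, x^n) ≠ 0`. -/
theorem exists_odd_subst_ne_zero (f : MvPolynomial (Fin 2) ℝ) (t : ℕ)
    (hf : f ≠ 0) (ht : f.support.card ≤ t) :
    ∃ n : ℕ, Odd n ∧ 3 ≤ n ∧ n ≤ 12 * t - 5 ∧
      (MvPolynomial.aeval ![X, X ^ n] f : Polynomial ℝ) ≠ 0 := by
  by_contra h
  push_neg at h
  set S := f.support with hS
  have hs1 : 1 ≤ S.card := Finset.card_pos.mpr (MvPolynomial.support_nonempty.mpr hf)
  have ht1 : 1 ≤ t := le_trans hs1 ht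
  set N : Finset ℕ := (Finset.range (6 * t - 3)).image (fun k => 2 * k + 3) with hN
  have hNcard : N.card = 6 * t - 3 := by
    rw [hN, Finset.card_image_of_injective _ (fun a b hab => by omega), Finset.card_range]
  -- substitution formula
  have haeval : ∀ n : ℕ, (MvPolynomial.aeval ![X, X ^ n] f : Polynomial ℝ)
      = ∑ m ∈ S, Polynomial.C (MvPolynomial.coeff m f) * X ^ (m 0 + n * m 1) := by
    intro n
    conv_lhs => rw [f.as_sum]
    rw [map_sum]
    refine Finset.sum_congr rfl fun m hm => ?_
    rw [MvPolynomial.aeval_monomial, Finsupp.prod_pow, Fin.prod_univ_two]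
    simp only [Matrix.cons_val_zero, Matrix.cons_val_one, Matrix.head_cons]
    rw [← pow_mul, ← pow_add]
    rfl
  -- all n in N give zero substitution
  have hzero : ∀ n ∈ N, (MvPolynomial.aeval ![X, X ^ n] f : Polynomial ℝ) = 0 := by
    intro n hn
    rw [hN, Finset.mem_image] at hn
    obtain ⟨k, hk, rfl⟩ := hn
    rw [Finset.mem_range] at hk
    exact h _ ⟨k + 1, by ring⟩ (by omega) (by omega)
  -- every monomial has a collision partner
  have hpartner : ∀ n m, ∃ m', n ∈ N → m ∈ S →
      m' ∈ S ∧ m' ≠ m ∧ m' 0 + n * m' 1 = m 0 + n * m 1 := by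
    intro n m
    by_cases hn : n ∈ N
    · by_cases hm : m ∈ S
      · by_contra hc
        push_neg at hc
        have h0 := congrArg (fun p => Polynomial.coeff p (m 0 + n * m 1)) (hzero n hn)
        rw [haeval n] at h0
        simp only [Polynomial.finset_sum_coeff, Polynomial.coeff_C_mul,
          Polynomial.coeff_X_pow, Polynomial.coeff_zero, mul_ite, mul_one, mul_zero] at h0
        rw [Finset.sum_eq_single_of_mem m hm] at h0
        · rw [if_pos rfl] at h0
          exact (MvPolynomial.mem_support_iff.mp hm) h0
        · intro b hb hbm
          rw [if_neg]
          intro heq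
          exact (hc b).2.2 hb hbm heq.symm
      · exact ⟨0, fun _ hm' => absurd hm' hm⟩
    · exact ⟨0, fun hn' => absurd hn' hn⟩
  choose p hp using hpartner
  -- injection from N ×ˢ S into S.offDiag
  have hcard : (N ×ˢ S).card ≤ S.offDiag.card := by
    apply Finset.card_le_card_of_injOn (fun q => (p q.1 q.2, q.2))
    · intro q hq
      rw [Finset.mem_coe, Finset.mem_product] at hq
      obtain ⟨h1, h2, h3⟩ := hp q.1 q.2 hq.1 hq.2
      exact Finset.mem_offDiag.mpr ⟨h1, hq.2, h2⟩
    · intro q1 hq1 q2 hq2 heq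
      rw [Finset.mem_coe, Finset.mem_product] at hq1 hq2
      obtain ⟨n, m⟩ := q1
      obtain ⟨n', m'⟩ := q2
      simp only [Prod.mk.injEq] at heq ⊢
      obtain ⟨hpeq, hmeq⟩ := heq
      subst hmeq
      refine ⟨?_, rfl⟩
      obtain ⟨hq1S, hqne1, he1⟩ := hp n m hq1.1 hq1.2
      obtain ⟨hq2S, hqne2, he2⟩ := hp n' m hq2.1 hq2.2
      rw [hpeq] at he1 hqne1
      set q := p n' m with hqdef
      have hne1 : q 1 ≠ m 1 := by
        intro h11
        apply hqne1
        have h00 : q 0 = m 0 := by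
          rw [h11] at he1; omega
        ext i
        fin_cases i
        · exact h00
        · exact h11
      have e1' : (q 0 : ℤ) + n * q 1 = m 0 + n * m 1 := by exact_mod_cast he1
      have e2' : (q 0 : ℤ) + n' * q 1 = m 0 + n' * m 1 := by exact_mod_cast he2
      have key : ((n : ℤ) - n') * ((q 1 : ℤ) - m 1) = 0 := by linear_combination e1' - e2'
      rcases mul_eq_zero.mp key with hk | hk
      · exact_mod_cast sub_eq_zero.mp hk
      · exact absurd (by exact_mod_cast sub_eq_zero.mp hk) hne1
  rw [Finset.card_product, hNcard, Finset.offDiag_card] at hcard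
  have hsub : S.card * S.card - S.card = (S.card - 1) * S.card := by
    rw [Nat.sub_mul, one_mul]
  rw [hsub] at hcard
  have hfin : 6 * t - 3 ≤ S.card - 1 :=
    Nat.le_of_mul_le_mul_right hcard hs1
  omega
end
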